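/- Let X be a nonnegative random variable with 1 − F_X(x) ~ ℓ(x) x^{-α} as x → ∞ for α > 0 and slowly varying ℓ, and let Y > 0 be independent of X with E(Y^{α+ε}) < ∞ for some ε > 0. Then Z = XY satisfies 1 − F_Z(z) ~ E(Y^α) ℓ(z) z^{-α} as z → ∞. -/

import Mathlib

open Filter Topology MeasureTheory ProbabilityTheory

private lemma exists_pow_between {y : ℝ} (hy : 1 ≤ y) :
    ∃ k : ℕ, y ≤ 2 ^ k ∧ (2:ℝ) ^ k ≤ 2 * y := by
  have hex : ∃ k : ℕ, y ≤ (2:ℝ) ^ k := by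
    obtain ⟨n, hn⟩ := pow_unbounded_of_one_lt y (one_lt_two (α := ℝ))
    exact ⟨n, hn.le⟩
  refine ⟨Nat.find hex, Nat.find_spec hex, ?_⟩
  rcases Nat.eq_zero_or_pos (Nat.find hex) with h0 | h0
  · rw [h0]; norm_num; linarith
  · have hm := Nat.find_min hex (m := Nat.find hex - 1) (by omega)
    push_neg at hm
    have : (2:ℝ) ^ Nat.find hex = 2 * 2 ^ (Nat.find hex - 1) := by
      rw [← pow_succ']
      congr 1
      omega
    rw [this]
    nlinarith

private lemma chain_upper {G : ℝ → ℝ} {z0 C : ℝ} (hC : 0 ≤ C) (hz0 : 0 < z0)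
    (h : ∀ u, z0 ≤ u → G u ≤ C * G (2 * u)) :
    ∀ k : ℕ, ∀ z : ℝ, z0 ≤ z / 2 ^ k → G (z / 2 ^ k) ≤ C ^ k * G z := by
  intro k
  induction k with
  | zero => intro z hz; simp
  | succ k ih =>
    intro z hz
    have hz' : z0 ≤ z / 2 ^ k := by
      have hzpos : 0 < z := by
        have h2p : (0:ℝ) < 2 ^ (k+1) := by positivity
        have := lt_of_lt_of_le hz0 hz
        by_contra hle
        push_neg at hle
        have : z / 2 ^ (k+1) ≤ 0 := div_nonpos_of_nonpos_of_nonneg hle h2p.le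
        linarith
      calc z0 ≤ z / 2 ^ (k+1) := hz
        _ ≤ z / 2 ^ k := by
          apply div_le_div_of_nonneg_left hzpos.le (by positivity)
          gcongr <;> norm_num
    have h2 : (2:ℝ) * (z / 2 ^ (k+1)) = z / 2 ^ k := by
      field_simp; ring
    calc G (z / 2 ^ (k+1)) ≤ C * G (2 * (z / 2 ^ (k+1))) := h _ hz
      _ = C * G (z / 2 ^ k) := by rw [h2]
      _ ≤ C * (C ^ k * G z) := by
          apply mul_le_mul_of_nonneg_left (ih z hz') hC
      _ = C ^ (k+1) * G z := by ring

private lemma chain_lower {G : ℝ → ℝ} {z0 c : ℝ} (hc : 0 ≤ c) (hz0 : 0 < z0)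
    (h : ∀ u, z0 ≤ u → c * G u ≤ G (2 * u)) :
    ∀ k : ℕ, c ^ k * G z0 ≤ G (2 ^ k * z0) := by
  intro k
  induction k with
  | zero => simp
  | succ k ih =>
    have h1 : z0 ≤ 2 ^ k * z0 := by nlinarith [one_le_pow₀ (n := k) (one_le_two (α := ℝ))]
    calc c ^ (k+1) * G z0 = c * (c ^ k * G z0) := by ring
      _ ≤ c * G (2 ^ k * z0) := mul_le_mul_of_nonneg_left ih hc
      _ ≤ G (2 * (2 ^ k * z0)) := h _ h1
      _ = G (2 ^ (k+1) * z0) := by ring_nf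


/-- Breiman's lemma: if 1 − F_X(x) ~ ℓ(x) x^{-α} with ℓ slowly varying and α > 0, and
Y > 0 is independent of X with E(Y^{α+ε}) < ∞, then Z = XY satisfies
1 − F_Z(z) ~ E(Y^α) ℓ(z) z^{-α}. -/
theorem breiman_lemma
    {Ω : Type*} [MeasurableSpace Ω] (μ : Measure Ω) [IsProbabilityMeasure μ]
    (X Y : Ω → ℝ) (ℓ : ℝ → ℝ) (α ε : ℝ) (hα : 0 < α) (hε : 0 < ε)
    (hXmeas : Measurable X) (hYmeas : Measurable Y)
    (hXnonneg : ∀ ω, 0 ≤ X ω) (hYpos : ∀ ω, 0 < Y ω)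
    (hℓpos : ∀ x : ℝ, 0 < x → 0 < ℓ x)
    (hℓ_slow : ∀ c : ℝ, 0 < c → Tendsto (fun t => ℓ (c * t) / ℓ t) atTop (𝓝 1))
    (hXtail : Tendsto
      (fun x : ℝ => (μ {ω | x < X ω}).toReal / (ℓ x * x ^ (-α))) atTop (𝓝 1))
    (hindep : IndepFun X Y μ)
    (hmom : Integrable (fun ω => Y ω ^ (α + ε)) μ) :
    Tendsto (fun z : ℝ =>
      (μ {ω | z < X ω * Y ω}).toReal / ((∫ ω, Y ω ^ α ∂μ) * ℓ z * z ^ (-α)))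
      atTop (𝓝 1) := by
  classical
  set β : ℝ := α + ε / 2 with hβ
  have hβpos : 0 < β := by positivity
  set G : ℝ → ℝ := fun x => (μ {ω | x < X ω}).toReal with hGdef
  set I : ℝ := ∫ ω, Y ω ^ α ∂μ with hIdef
  have hGanti : Antitone G := by
    intro a b hab
    exact ENNReal.toReal_mono (measure_ne_top μ _)
      (measure_mono fun ω (h : b < X ω) => lt_of_le_of_lt hab h)
  have hGnonneg : ∀ x, 0 ≤ G x := fun x => ENNReal.toReal_nonneg
  have hGle1 : ∀ x, G x ≤ 1 := by
    intro x
    have := prob_le_one (μ := μ) (s := {ω | x < X ω})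
    simpa [hGdef] using ENNReal.toReal_mono ENNReal.one_ne_top this
  have hGpos : ∀ᶠ z in atTop, 0 < G z := by
    have h1 := hXtail.eventually (lt_mem_nhds (show (1:ℝ)/2 < 1 by norm_num))
    filter_upwards [h1, eventually_gt_atTop (0:ℝ)] with z hz hz0
    have hd : 0 < ℓ z * z ^ (-α) :=
      mul_pos (hℓpos z hz0) (Real.rpow_pos_of_pos hz0 _)
    rcases div_pos_iff.mp (lt_trans one_half_pos hz) with ⟨ha, _⟩ | ⟨_, hb⟩
    · exact ha
    · linarith
  have hratio : ∀ y : ℝ, 0 < y →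
      Tendsto (fun z => G (z / y) / G z) atTop (𝓝 (y ^ α)) := by
    intro y hy
    have hdiv : Tendsto (fun z : ℝ => z / y) atTop atTop :=
      Tendsto.atTop_div_const hy tendsto_id
    have h1 : Tendsto (fun z => G (z / y) / (ℓ (z / y) * (z / y) ^ (-α)))
        atTop (𝓝 1) := hXtail.comp hdiv
    have h2 : Tendsto (fun z => ℓ (z / y) / ℓ z) atTop (𝓝 1) := by
      have := hℓ_slow (1 / y) (by positivity)
      refine this.congr fun t => ?_
      rw [one_div, inv_mul_eq_div]
    have h3 : Tendsto
        (fun z => (G (z / y) / (ℓ (z / y) * (z / y) ^ (-α)) /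
          (G z / (ℓ z * z ^ (-α))) * (ℓ (z / y) / ℓ z)) * y ^ α)
        atTop (𝓝 (y ^ α)) := by
      have := ((h1.div hXtail one_ne_zero).mul h2).mul_const (y ^ α)
      simpa using this
    refine h3.congr' ?_
    filter_upwards [hGpos, eventually_gt_atTop (0:ℝ)] with z hGz hz
    have hzy : 0 < z / y := div_pos hz hy
    have hℓz : 0 < ℓ z := hℓpos z hz
    have hℓzy : 0 < ℓ (z / y) := hℓpos _ hzy
    have hrz : (0:ℝ) < z ^ (-α) := Real.rpow_pos_of_pos hz _
    have hry : (0:ℝ) < y ^ (-α) := Real.rpow_pos_of_pos hy _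
    have hrzy : (z / y) ^ (-α) = z ^ (-α) / y ^ (-α) := Real.div_rpow hz.le hy.le _
    have hyα : (0:ℝ) < y ^ α := Real.rpow_pos_of_pos hy _
    rw [hrzy, Real.rpow_neg hy.le α]
    field_simp
  obtain ⟨z0, hz0_one, hz0G, hz0dbl⟩ :
      ∃ z0 : ℝ, 1 ≤ z0 ∧ (∀ z, z0 ≤ z → 0 < G z) ∧
        (∀ z, z0 ≤ z → (2:ℝ) ^ (-β) * G z ≤ G (2 * z)) := by
    have hhalf : Tendsto (fun z => G (2 * z) / G z) atTop (𝓝 ((1/2 : ℝ) ^ α)) := by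
      refine (hratio (1/2) (by norm_num)).congr fun z => ?_
      norm_num [div_div_eq_mul_div, mul_comm]
    have hlt : (2:ℝ) ^ (-β) < (1/2 : ℝ) ^ α := by
      rw [show ((1:ℝ)/2) = 2⁻¹ by norm_num,
        show (2:ℝ)⁻¹ ^ α = (2:ℝ) ^ (-α) by
          rw [Real.inv_rpow (by norm_num), ← Real.rpow_neg (by norm_num)]]
      apply Real.rpow_lt_rpow_of_exponent_lt one_lt_two
      simp only [hβ]
      linarith
    have hev := hhalf.eventually (lt_mem_nhds hlt)
    have := hGpos.and (hev.and (eventually_ge_atTop (1:ℝ)))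
    obtain ⟨z0, hz0⟩ := eventually_atTop.mp this
    refine ⟨max z0 1, le_max_right _ _, ?_, ?_⟩
    · intro z hz; exact (hz0 z (le_trans (le_max_left _ _) hz)).1
    · intro z hz
      obtain ⟨hg, hr, -⟩ := hz0 z (le_trans (le_max_left _ _) hz)
      have := (lt_div_iff₀ hg).mp hr
      linarith
  have hz0pos : 0 < z0 := lt_of_lt_of_le one_pos hz0_one
  have hpotter : ∀ y z : ℝ, 1 ≤ y → 2 * z0 * y ≤ z →
      G (z / y) ≤ (2 * y) ^ β * G z := by
    intro y z hy hz
    have hypos : 0 < y := lt_of_lt_of_le one_pos hy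
    have hzpos : 0 < z := lt_of_lt_of_le (by positivity) hz
    have hchain : ∀ u, z0 ≤ u → G u ≤ (2:ℝ) ^ β * G (2 * u) := by
      intro u hu
      have h1 := hz0dbl u hu
      have h2 : ((2:ℝ) ^ β) * ((2:ℝ) ^ (-β) * G u) ≤ (2:ℝ) ^ β * G (2 * u) :=
        mul_le_mul_of_nonneg_left h1 (Real.rpow_nonneg (by norm_num) _)
      calc G u = (2:ℝ) ^ β * ((2:ℝ) ^ (-β) * G u) := by
            rw [← mul_assoc, ← Real.rpow_add two_pos]; simp
        _ ≤ _ := h2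
    obtain ⟨k, hk1, hk2⟩ := exists_pow_between hy
    have h2k : (0:ℝ) < 2 ^ k := by positivity
    have hdk : z0 ≤ z / 2 ^ k := by
      rw [le_div_iff₀ h2k]
      nlinarith
    have hmono : G (z / y) ≤ G (z / 2 ^ k) := by
      apply hGanti
      apply div_le_div_of_nonneg_left hzpos.le hypos hk1
    have := chain_upper (G := G) (Real.rpow_nonneg (by norm_num : (0:ℝ) ≤ 2) β)
      hz0pos hchain k z hdk
    have hCk : ((2:ℝ) ^ β) ^ k ≤ (2 * y) ^ β := by
      have e1 : ((2:ℝ) ^ β) ^ k = ((2:ℝ) ^ k) ^ β := by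
        rw [← Real.rpow_natCast ((2:ℝ) ^ β) k, ← Real.rpow_natCast (2:ℝ) k,
          ← Real.rpow_mul (by norm_num), ← Real.rpow_mul (by norm_num), mul_comm]
      rw [e1]
      exact Real.rpow_le_rpow h2k.le hk2 hβpos.le
    calc G (z / y) ≤ G (z / 2 ^ k) := hmono
      _ ≤ ((2:ℝ) ^ β) ^ k * G z := this
      _ ≤ (2 * y) ^ β * G z := mul_le_mul_of_nonneg_right hCk (hGnonneg z)
  obtain ⟨c, hcpos, hclow⟩ : ∃ c : ℝ, 0 < c ∧ ∀ z, z0 ≤ z → c * z ^ (-β) ≤ G z := by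
    have hGz0 : 0 < G z0 := hz0G z0 le_rfl
    refine ⟨G z0 * (2 / z0) ^ (-β), by positivity, ?_⟩
    intro z hz
    have hzpos : 0 < z := lt_of_lt_of_le hz0pos hz
    have hy1 : 1 ≤ z / z0 := (one_le_div hz0pos).mpr hz
    obtain ⟨k, hk1, hk2⟩ := exists_pow_between hy1
    have h2k : (0:ℝ) < 2 ^ k := by positivity
    have hclower := chain_lower (G := G)
      (Real.rpow_nonneg (by norm_num : (0:ℝ) ≤ 2) (-β)) hz0pos hz0dbl k
    have hmono : G (2 ^ k * z0) ≤ G z := by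
      apply hGanti
      rw [div_le_iff₀ hz0pos] at hk1
      linarith
    have hck : ((2:ℝ) ^ (-β)) ^ k = ((2:ℝ) ^ k) ^ (-β) := by
      rw [← Real.rpow_natCast ((2:ℝ) ^ (-β)) k, ← Real.rpow_natCast (2:ℝ) k,
        ← Real.rpow_mul (by norm_num), ← Real.rpow_mul (by norm_num), mul_comm]
    have hbnd : ((2:ℝ) ^ k) ^ (-β) ≥ (2 * z / z0) ^ (-β) := by
      have h1 : (0:ℝ) < 2 * z / z0 := by positivity
      rw [Real.rpow_neg h2k.le, Real.rpow_neg h1.le, ge_iff_le]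
      exact inv_anti₀ (Real.rpow_pos_of_pos h2k _)
        (Real.rpow_le_rpow h2k.le (by rw [mul_div_assoc]; exact hk2) hβpos.le)
    have he : (2 * z / z0) ^ (-β) = (2 / z0) ^ (-β) * z ^ (-β) := by
      rw [show 2 * z / z0 = (2 / z0) * z by ring, Real.mul_rpow (by positivity) hzpos.le]
    calc G z0 * (2 / z0) ^ (-β) * z ^ (-β) = G z0 * ((2 / z0) ^ (-β) * z ^ (-β)) := by ring
      _ = G z0 * (2 * z / z0) ^ (-β) := by rw [he]
      _ ≤ G z0 * ((2:ℝ) ^ k) ^ (-β) := by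
          exact mul_le_mul_of_nonneg_left hbnd hGz0.le
      _ = ((2:ℝ) ^ (-β)) ^ k * G z0 := by rw [hck]; ring
      _ ≤ G (2 ^ k * z0) := hclower
      _ ≤ G z := hmono
  have hGgrow : Tendsto (fun z => z ^ (α + ε) * G z) atTop atTop := by
    have hgrow2 : Tendsto (fun z : ℝ => c * z ^ (ε / 2)) atTop atTop :=
      (tendsto_rpow_atTop (by positivity)).const_mul_atTop hcpos
    apply tendsto_atTop_mono' atTop ?_ hgrow2
    filter_upwards [eventually_ge_atTop z0, eventually_gt_atTop (0:ℝ)] with z hz hzpos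
    have h1 := hclow z hz
    have h2 : z ^ (α + ε) * (c * z ^ (-β)) = c * z ^ (ε / 2) := by
      rw [show z ^ (α + ε) * (c * z ^ (-β)) = c * (z ^ (α + ε) * z ^ (-β)) by ring,
        ← Real.rpow_add hzpos]
      congr 2
      simp only [hβ]
      ring
    calc c * z ^ (ε / 2) = z ^ (α + ε) * (c * z ^ (-β)) := h2.symm
      _ ≤ z ^ (α + ε) * G z := by
          exact mul_le_mul_of_nonneg_left h1 (Real.rpow_nonneg hzpos.le _)
  have hrep : ∀ z : ℝ, (μ {ω | z < X ω * Y ω}).toReal = ∫ ω, G (z / Y ω) ∂μ := by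
    intro z
    have hs : MeasurableSet {p : ℝ × ℝ | z < p.1 * p.2} :=
      measurableSet_lt measurable_const (measurable_fst.mul measurable_snd)
    have hmap := (indepFun_iff_map_prod_eq_prod_map_map
      hXmeas.aemeasurable hYmeas.aemeasurable).mp hindep
    have hmeas_right : Measurable fun y => (μ.map X) ((fun x => (x, y)) ⁻¹' {p : ℝ × ℝ | z < p.1 * p.2}) :=
      measurable_measure_prodMk_right hs
    have e1 : μ {ω | z < X ω * Y ω}
        = ∫⁻ ω, (μ.map X) {x | z < x * Y ω} ∂μ := by
      calc μ {ω | z < X ω * Y ω}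
          = μ.map (fun ω => (X ω, Y ω)) {p : ℝ × ℝ | z < p.1 * p.2} := by
            rw [Measure.map_apply (hXmeas.prodMk hYmeas) hs]; rfl
        _ = (μ.map X).prod (μ.map Y) {p : ℝ × ℝ | z < p.1 * p.2} := by rw [hmap]
        _ = ∫⁻ y, (μ.map X) ((fun x => (x, y)) ⁻¹' {p : ℝ × ℝ | z < p.1 * p.2}) ∂(μ.map Y) :=
            Measure.prod_apply_symm hs
        _ = ∫⁻ ω, (μ.map X) {x | z < x * Y ω} ∂μ := by
            rw [lintegral_map hmeas_right hYmeas]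
            rfl
    have e2 : ∀ ω, (μ.map X) {x | z < x * Y ω} = μ {ω' | z / Y ω < X ω'} := by
      intro ω
      have hms : MeasurableSet {x : ℝ | z < x * Y ω} :=
        measurableSet_lt measurable_const (measurable_id.mul_const _)
      rw [Measure.map_apply hXmeas hms]
      congr 1
      ext ω'
      simp [div_lt_iff₀ (hYpos ω)]
    have emeas : AEMeasurable (fun ω => μ {ω' | z / Y ω < X ω'}) μ := by
      have : (fun ω => μ {ω' | z / Y ω < X ω'})
          = (fun y => (μ.map X) ((fun x => (x, y)) ⁻¹' {p : ℝ × ℝ | z < p.1 * p.2})) ∘ Y := by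
        funext ω
        simp only [Function.comp_apply]
        exact (e2 ω).symm
      rw [this]
      exact (hmeas_right.comp hYmeas).aemeasurable
    have e3 : ∫ ω, G (z / Y ω) ∂μ
        = (∫⁻ ω, μ {ω' | z / Y ω < X ω'} ∂μ).toReal := by
      exact integral_toReal emeas (Eventually.of_forall fun ω => measure_lt_top μ _)
    rw [e3, e1]
    congr 1
    exact lintegral_congr fun ω => e2 ω
  have hint : ∀ γ : ℝ, 0 ≤ γ → γ ≤ α + ε → Integrable (fun ω => Y ω ^ γ) μ := by
    intro γ hγ0 hγ
    refine ((integrable_const (1:ℝ)).add hmom).mono'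
      ((by fun_prop : Measurable fun ω => Y ω ^ γ).aestronglyMeasurable) ?_
    filter_upwards with ω
    have hYω := hYpos ω
    rw [Real.norm_of_nonneg (Real.rpow_nonneg hYω.le _)]
    rcases le_total (Y ω) 1 with h1 | h1
    · have := Real.rpow_le_one hYω.le h1 hγ0
      have h2 : 0 ≤ Y ω ^ (α + ε) := Real.rpow_nonneg hYω.le _
      simpa using by linarith
    · have := Real.rpow_le_rpow_of_exponent_le h1 hγ
      simpa using by linarith
  have hYα_int : Integrable (fun ω => Y ω ^ α) μ := hint α hα.le (by linarith)
  have hIpos : 0 < I := by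
    rw [hIdef]
    rw [integral_pos_iff_support_of_nonneg
      (fun ω => Real.rpow_nonneg (hYpos ω).le _) hYα_int]
    have : Function.support (fun ω => Y ω ^ α) = Set.univ := by
      ext ω
      simp only [Function.mem_support, Set.mem_univ, iff_true]
      exact (Real.rpow_pos_of_pos (hYpos ω) α).ne'
    rw [this]
    simp
  set F : ℝ → Ω → ℝ := fun z =>
    Set.indicator {ω | Y ω ≤ z / (2 * z0)} (fun ω => G (z / Y ω) / G z) with hFdef
  have hsmeas : ∀ z : ℝ, MeasurableSet {ω | Y ω ≤ z / (2 * z0)} := fun z =>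
    hYmeas measurableSet_Iic
  have hfmeas : ∀ z : ℝ, Measurable (fun ω => G (z / Y ω) / G z) := fun z =>
    (hGanti.measurable.comp (measurable_const.div hYmeas)).div_const _
  have hFlim : Tendsto (fun z => ∫ ω, F z ω ∂μ) atTop (𝓝 I) := by
    rw [hIdef]
    have hβle : β ≤ α + ε := by simp only [hβ]; linarith
    have hYβ_int : Integrable (fun ω => Y ω ^ β) μ := hint β hβpos.le hβle
    apply tendsto_integral_filter_of_dominated_convergence
      (bound := fun ω => 1 + 2 ^ β * Y ω ^ β)
    · filter_upwards with z
      exact (Measurable.indicator (hfmeas z) (hsmeas z)).aestronglyMeasurable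
    · filter_upwards [eventually_ge_atTop (2 * z0)] with z hz
      filter_upwards with ω
      have hzz0 : z0 ≤ z := by linarith
      have hGz : 0 < G z := hz0G z hzz0
      have hzpos : 0 < z := lt_of_lt_of_le (by positivity) hz
      have hYω := hYpos ω
      have hbnn : (0:ℝ) ≤ 2 ^ β * Y ω ^ β := by positivity
      by_cases hmem : ω ∈ {ω | Y ω ≤ z / (2 * z0)}
      · simp only [hFdef]
        rw [Set.indicator_of_mem hmem]
        rw [Real.norm_of_nonneg (div_nonneg (hGnonneg _) (hGnonneg _))]
        rcases le_total (Y ω) 1 with h1 | h1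
        · have hle : z ≤ z / Y ω := by
            rw [le_div_iff₀ hYω]
            nlinarith
          have := hGanti hle
          have h2 : G (z / Y ω) / G z ≤ 1 := (div_le_one hGz).mpr this
          linarith
        · have hzy : 2 * z0 * Y ω ≤ z := by
            have := (le_div_iff₀ (by positivity : (0:ℝ) < 2 * z0)).mp hmem
            linarith
          have hp := hpotter (Y ω) z h1 hzy
          have h2 : G (z / Y ω) / G z ≤ (2 * Y ω) ^ β := (div_le_iff₀ hGz).mpr hp
          rw [Real.mul_rpow (by norm_num) hYω.le] at h2
          linarith
      · simp only [hFdef]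
        rw [Set.indicator_of_notMem hmem]
        simp only [norm_zero]
        linarith
    · exact (integrable_const 1).add (hYβ_int.const_mul _)
    · filter_upwards with ω
      refine ((hratio (Y ω) (hYpos ω)).congr' ?_)
      filter_upwards [eventually_ge_atTop (2 * z0 * Y ω)] with z hz
      have hmem : ω ∈ {ω | Y ω ≤ z / (2 * z0)} := by
        simp only [Set.mem_setOf_eq]
        rw [le_div_iff₀ (by positivity : (0:ℝ) < 2 * z0)]
        linarith
      simp only [hFdef]
      rw [Set.indicator_of_mem hmem]
  set M : ℝ := ∫ ω, Y ω ^ (α + ε) ∂μ with hMdef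
  have hf_int : ∀ z : ℝ, z0 ≤ z → Integrable (fun ω => G (z / Y ω) / G z) μ := by
    intro z hz
    have hGz : 0 < G z := hz0G z hz
    refine (integrable_const ((G z)⁻¹)).mono'
      (hfmeas z).aestronglyMeasurable ?_
    filter_upwards with ω
    rw [Real.norm_of_nonneg (div_nonneg (hGnonneg _) (hGnonneg _)), div_eq_mul_inv]
    calc G (z / Y ω) * (G z)⁻¹ ≤ 1 * (G z)⁻¹ :=
        mul_le_mul_of_nonneg_right (hGle1 _) (inv_nonneg.mpr (hGnonneg z))
      _ = (G z)⁻¹ := one_mul _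
  have hT : Tendsto (fun z => ∫ ω, G (z / Y ω) / G z ∂μ) atTop (𝓝 I) := by
    have key : ∀ᶠ z in atTop,
        0 ≤ (∫ ω, G (z / Y ω) / G z ∂μ) - (∫ ω, F z ω ∂μ) ∧
        (∫ ω, G (z / Y ω) / G z ∂μ) - (∫ ω, F z ω ∂μ)
          ≤ M * (2 * z0) ^ (α + ε) * (z ^ (α + ε) * G z)⁻¹ := by
      filter_upwards [eventually_ge_atTop (2 * z0)] with z hz
      have hzz0 : z0 ≤ z := by linarith
      have hGz : 0 < G z := hz0G z hzz0
      have hzpos : 0 < z := lt_of_lt_of_le (by positivity) hz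
      have hcz : (0:ℝ) < z / (2 * z0) := by positivity
      have hf := hf_int z hzz0
      have hF : Integrable (F z) μ := hf.indicator (hsmeas z)
      have hFle : ∀ ω, F z ω ≤ G (z / Y ω) / G z := by
        intro ω
        by_cases hmem : ω ∈ {ω | Y ω ≤ z / (2 * z0)}
        · simp only [hFdef]
          rw [Set.indicator_of_mem hmem]
        · simp only [hFdef]
          rw [Set.indicator_of_notMem hmem]
          exact div_nonneg (hGnonneg _) (hGnonneg _)
      constructor
      · exact sub_nonneg.mpr (integral_mono hF hf hFle)
      · rw [← integral_sub hf hF]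
        have hub : ∫ ω, (G (z / Y ω) / G z - F z ω) ∂μ
            ≤ ∫ ω, Set.indicator {ω | Y ω ≤ z / (2 * z0)}ᶜ
              (fun _ => (G z)⁻¹) ω ∂μ := by
          apply integral_mono (hf.sub hF)
            ((integrable_const _).indicator (hsmeas z).compl)
          intro ω
          rw [Pi.sub_apply]
          by_cases hmem : ω ∈ {ω | Y ω ≤ z / (2 * z0)}
          · simp only [hFdef]
            rw [Set.indicator_of_mem hmem,
              Set.indicator_of_notMem (by simpa using hmem)]
            simp
          · simp only [hFdef]
            rw [Set.indicator_of_notMem hmem,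
              Set.indicator_of_mem (by simpa using hmem), sub_zero,
              div_eq_mul_inv]
            calc G (z / Y ω) * (G z)⁻¹ ≤ 1 * (G z)⁻¹ :=
                mul_le_mul_of_nonneg_right (hGle1 _) (inv_nonneg.mpr (hGnonneg z))
              _ = (G z)⁻¹ := one_mul _
        have hind : ∫ ω, Set.indicator {ω | Y ω ≤ z / (2 * z0)}ᶜ
            (fun _ => (G z)⁻¹) ω ∂μ
            = (μ {ω | Y ω ≤ z / (2 * z0)}ᶜ).toReal * (G z)⁻¹ := by
          rw [integral_indicator_const _ (hsmeas z).compl]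
          simp [smul_eq_mul, measureReal_def]
        have hsubset : {ω | Y ω ≤ z / (2 * z0)}ᶜ
            ⊆ {ω | (z / (2 * z0)) ^ (α + ε) ≤ Y ω ^ (α + ε)} := by
          intro ω hω
          simp only [Set.mem_compl_iff, Set.mem_setOf_eq, not_le] at hω
          exact Real.rpow_le_rpow hcz.le hω.le (by positivity)
        have hmarkov := mul_meas_ge_le_integral_of_nonneg
          (Eventually.of_forall fun ω => Real.rpow_nonneg (hYpos ω).le (α + ε))
          hmom ((z / (2 * z0)) ^ (α + ε))
        have hczp : (0:ℝ) < (z / (2 * z0)) ^ (α + ε) := Real.rpow_pos_of_pos hcz _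
        have htr : (μ {ω | Y ω ≤ z / (2 * z0)}ᶜ).toReal
            ≤ (μ {ω | (z / (2 * z0)) ^ (α + ε) ≤ Y ω ^ (α + ε)}).toReal :=
          ENNReal.toReal_mono (measure_ne_top μ _) (measure_mono hsubset)
        have hμle : (μ {ω | Y ω ≤ z / (2 * z0)}ᶜ).toReal
            ≤ M / (z / (2 * z0)) ^ (α + ε) := by
          rw [le_div_iff₀ hczp]
          calc (μ {ω | Y ω ≤ z / (2 * z0)}ᶜ).toReal * (z / (2 * z0)) ^ (α + ε)
              ≤ (μ {ω | (z / (2 * z0)) ^ (α + ε) ≤ Y ω ^ (α + ε)}).toReal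
                * (z / (2 * z0)) ^ (α + ε) :=
                mul_le_mul_of_nonneg_right htr hczp.le
            _ ≤ M := by rw [mul_comm]; exact hmarkov
        have heq : M / (z / (2 * z0)) ^ (α + ε) * (G z)⁻¹
            = M * (2 * z0) ^ (α + ε) * (z ^ (α + ε) * G z)⁻¹ := by
          rw [Real.div_rpow hzpos.le (by positivity : (0:ℝ) ≤ 2 * z0)]
          have h1 : z ^ (α + ε) ≠ 0 := (Real.rpow_pos_of_pos hzpos _).ne'
          have h2 : (2 * z0 : ℝ) ^ (α + ε) ≠ 0 :=
            (Real.rpow_pos_of_pos (by positivity) _).ne'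
          field_simp
        calc ∫ ω, (G (z / Y ω) / G z - F z ω) ∂μ
            ≤ (μ {ω | Y ω ≤ z / (2 * z0)}ᶜ).toReal * (G z)⁻¹ := by
              rw [← hind]; exact hub
          _ ≤ M / (z / (2 * z0)) ^ (α + ε) * (G z)⁻¹ :=
              mul_le_mul_of_nonneg_right hμle (inv_nonneg.mpr (hGnonneg z))
          _ = M * (2 * z0) ^ (α + ε) * (z ^ (α + ε) * G z)⁻¹ := heq
    have hR : Tendsto (fun z : ℝ => M * (2 * z0) ^ (α + ε) * (z ^ (α + ε) * G z)⁻¹)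
        atTop (𝓝 0) := by
      have h0 := hGgrow.inv_tendsto_atTop
      have := h0.const_mul (M * (2 * z0) ^ (α + ε))
      simpa using this
    have hdiff : Tendsto
        (fun z => (∫ ω, G (z / Y ω) / G z ∂μ) - (∫ ω, F z ω ∂μ)) atTop (𝓝 0) := by
      apply tendsto_of_tendsto_of_tendsto_of_le_of_le' tendsto_const_nhds hR
      · exact key.mono fun z h => h.1
      · exact key.mono fun z h => h.2
    have heq : (fun z => ∫ ω, G (z / Y ω) / G z ∂μ)
        = fun z => ((∫ ω, G (z / Y ω) / G z ∂μ) - (∫ ω, F z ω ∂μ)) + (∫ ω, F z ω ∂μ) := by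
      funext z; ring
    rw [heq]
    simpa using hdiff.add hFlim
  -- final assembly
  have h1 : Tendsto (fun z => (∫ ω, G (z / Y ω) / G z ∂μ) / I) atTop (𝓝 1) := by
    have := hT.div_const I
    rwa [div_self hIpos.ne'] at this
  have h2 := h1.mul hXtail
  rw [one_mul] at h2
  refine h2.congr' ?_
  filter_upwards [eventually_ge_atTop z0, eventually_gt_atTop (0:ℝ)] with z hz hzpos
  have hGz : 0 < G z := hz0G z hz
  have hℓz : 0 < ℓ z := hℓpos z hzpos
  have hrz : (0:ℝ) < z ^ (-α) := Real.rpow_pos_of_pos hzpos _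
  have hdiv : ∫ ω, G (z / Y ω) / G z ∂μ = (∫ ω, G (z / Y ω) ∂μ) / G z :=
    integral_div _ _
  rw [hdiv, hrep z]
  field_simp
  ring
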